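/- Let ρ, σ be density matrices and 0 < α < 1. With Q_α(ρ‖σ) := (1-α)∫₀^∞ γ^{α-2} Tr[ρ{ρ ≤ γσ}] dγ, the bound Tr[ρ {ρ ≤ cσ}] ≤ c^{1-α} Q_α(ρ‖σ) holds for every c > 0, equivalently 1 - Tr[ρ{ρ > cσ}] ≤ e^{(1-α)log c + (α-1)D_α(ρ‖σ)}. -/

import Mathlib

open MeasureTheory Matrix
open scoped ComplexOrder
noncomputable section

/-- The positive part `(X)₊` of a Hermitian matrix, via continuous functional calculus. -/
def mposPart {n : ℕ} (X : Matrix (Fin n) (Fin n) ℂ) : Matrix (Fin n) (Fin n) ℂ :=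
  cfc (fun x : ℝ => max x 0) X

/-- The spectral projection of a Hermitian matrix onto its strictly positive part,
so that `projPos (A - γ • B)` is the projection `{A > γB}`. -/
def projPos {n : ℕ} (X : Matrix (Fin n) (Fin n) ℂ) : Matrix (Fin n) (Fin n) ℂ :=
  cfc (fun x : ℝ => if 0 < x then (1:ℝ) else 0) X

/-- The spectral projection of a Hermitian matrix onto its nonnegative part,
so that `projNonneg (γ • B - A)` is the projection `{A ≤ γB}`. -/
def projNonneg {n : ℕ} (X : Matrix (Fin n) (Fin n) ℂ) : Matrix (Fin n) (Fin n) ℂ :=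
  cfc (fun x : ℝ => if 0 ≤ x then (1:ℝ) else 0) X

/-- Matrix logarithm via functional calculus. -/
def mlog {n : ℕ} (X : Matrix (Fin n) (Fin n) ℂ) : Matrix (Fin n) (Fin n) ℂ :=
  cfc Real.log X

/-- Real matrix power via functional calculus (`Real.rpow`, so negative powers of
positive semidefinite matrices are taken on the support). -/
def mpow {n : ℕ} (X : Matrix (Fin n) (Fin n) ℂ) (a : ℝ) : Matrix (Fin n) (Fin n) ℂ :=
  cfc (fun x : ℝ => x ^ a) X

section Aux

variable {n : ℕ}


lemma specContOn (X : Matrix (Fin n) (Fin n) ℂ) (f : ℝ → ℝ) :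
    ContinuousOn f (spectrum ℝ X) :=
  (Matrix.finite_real_spectrum (A := X)).continuousOn f

lemma trace_re_nonneg_of_posSemidef {A : Matrix (Fin n) (Fin n) ℂ} (hA : A.PosSemidef) :
    0 ≤ A.trace.re := by
  have h : ∀ i, 0 ≤ (A i i).re := by
    intro i
    exact (Complex.le_def.mp (hA.diag_nonneg (i := i))).1
  rw [Matrix.trace]
  simp only [Complex.re_sum]
  exact Finset.sum_nonneg fun i _ => h i

lemma trace_mul_re_nonneg {A B : Matrix (Fin n) (Fin n) ℂ}
    (hA : A.PosSemidef) (hB : B.PosSemidef) : 0 ≤ (A * B).trace.re := by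
  obtain ⟨C, rfl⟩ : ∃ C : Matrix (Fin n) (Fin n) ℂ, B = Cᴴ * C := by
    open scoped MatrixOrder in
    exact CStarAlgebra.nonneg_iff_eq_star_mul_self.mp hB.nonneg
  have h1 : (A * (Cᴴ * C)).trace = (C * A * Cᴴ).trace := by
    rw [← mul_assoc, Matrix.trace_mul_cycle]
  rw [h1]
  exact trace_re_nonneg_of_posSemidef (hA.mul_mul_conjTranspose_same C)

def mnegPart {n : ℕ} (X : Matrix (Fin n) (Fin n) ℂ) : Matrix (Fin n) (Fin n) ℂ :=
  cfc (fun x : ℝ => max (-x) 0) X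

lemma cfc_posSemidef {X : Matrix (Fin n) (Fin n) ℂ} (hX : X.IsHermitian) (f : ℝ → ℝ)
    (hf : ∀ x, 0 ≤ f x) : (cfc f X).PosSemidef := by
  rw [hX.cfc_eq]
  unfold Matrix.IsHermitian.cfc
  rw [Unitary.conjStarAlgAut_apply, star_eq_conjTranspose]
  refine Matrix.PosSemidef.mul_mul_conjTranspose_same ?_ _
  refine Matrix.posSemidef_diagonal_iff.mpr fun i => ?_
  simpa using Complex.zero_le_real.mpr (hf _)

lemma projNonneg_posSemidef {X : Matrix (Fin n) (Fin n) ℂ} (hX : X.IsHermitian) :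
    (projNonneg X).PosSemidef :=
  cfc_posSemidef hX _ fun x => by split <;> norm_num

lemma one_sub_projNonneg_posSemidef {X : Matrix (Fin n) (Fin n) ℂ} (hX : X.IsHermitian) :
    (1 - projNonneg X).PosSemidef := by
  have hX' : IsSelfAdjoint X := hX
  have h : (1 : Matrix (Fin n) (Fin n) ℂ) - projNonneg X
      = cfc (fun x : ℝ => 1 - (if 0 ≤ x then (1:ℝ) else 0)) X := by
    rw [cfc_sub _ _ X (specContOn X _) (specContOn X _), cfc_const_one ℝ X]
    rfl
  rw [h]
  exact cfc_posSemidef hX _ fun x => by split <;> norm_num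

lemma mul_projNonneg_eq {X : Matrix (Fin n) (Fin n) ℂ} (hX : X.IsHermitian) :
    X * projNonneg X = mposPart X := by
  have hX' : IsSelfAdjoint X := hX
  have h : (fun x : ℝ => max x 0) = fun x : ℝ => x * (if 0 ≤ x then (1:ℝ) else 0) := by
    funext x
    by_cases h : 0 ≤ x
    · simp [h, max_eq_left h]
    · simp [h, max_eq_right (le_of_not_ge h)]
  rw [mposPart, h, cfc_mul _ _ X (specContOn X _) (specContOn X _), cfc_id' ℝ X]
  rfl

lemma mposPart_sub_mnegPart {X : Matrix (Fin n) (Fin n) ℂ} (hX : X.IsHermitian) :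
    mposPart X - mnegPart X = X := by
  have hX' : IsSelfAdjoint X := hX
  rw [mposPart, mnegPart, ← cfc_sub _ _ X (specContOn X _) (specContOn X _)]
  have h : (fun x : ℝ => max x 0 - max (-x) 0) = fun x : ℝ => x := by
    funext x
    rcases le_total 0 x with h | h
    · simp [max_eq_left h, max_eq_right (neg_nonpos.mpr h)]
    · simp [max_eq_right h, max_eq_left (neg_nonneg.mpr h)]
  rw [h, cfc_id' ℝ X]

lemma trace_mul_le_trace_mul_projNonneg {X M : Matrix (Fin n) (Fin n) ℂ}
    (hX : X.IsHermitian) (hM : M.PosSemidef) (hM1 : (1 - M).PosSemidef) :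
    (X * M).trace.re ≤ (X * projNonneg X).trace.re := by
  have hpos : (mposPart X).PosSemidef := cfc_posSemidef hX _ fun x => le_max_right x 0
  have hneg : (mnegPart X).PosSemidef := cfc_posSemidef hX _ fun x => le_max_right (-x) 0
  have key : X * projNonneg X - X * M = mposPart X * (1 - M) + mnegPart X * M := by
    have hXM : X * M = mposPart X * M - mnegPart X * M := by
      conv_lhs => rw [← mposPart_sub_mnegPart hX]
      rw [sub_mul]
    rw [mul_projNonneg_eq hX, hXM]
    noncomm_ring
  have h1 : 0 ≤ (mposPart X * (1 - M)).trace.re := trace_mul_re_nonneg hpos hM1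
  have h2 : 0 ≤ (mnegPart X * M).trace.re := trace_mul_re_nonneg hneg hM
  have h3 : (X * projNonneg X).trace.re - (X * M).trace.re
      = (mposPart X * (1 - M)).trace.re + (mnegPart X * M).trace.re := by
    rw [← Complex.sub_re, ← Matrix.trace_sub, key, Matrix.trace_add, Complex.add_re]
  linarith

lemma projPos_neg_eq {X : Matrix (Fin n) (Fin n) ℂ} (hX : X.IsHermitian) :
    projPos (-X) = 1 - projNonneg X := by
  have hX' : IsSelfAdjoint X := hX
  have h1 : projPos (-X)
      = cfc (fun x : ℝ => if 0 < -x then (1:ℝ) else 0) X := by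
    rw [projPos]
    rw [← cfc_comp_neg (f := fun x : ℝ => if 0 < x then (1:ℝ) else 0) (a := X)
      (((Matrix.finite_real_spectrum (A := X)).image _).continuousOn _) hX']
  rw [h1]
  have h2 : (1 : Matrix (Fin n) (Fin n) ℂ) - projNonneg X
      = cfc (fun x : ℝ => 1 - (if 0 ≤ x then (1:ℝ) else 0)) X := by
    rw [cfc_sub _ _ X (specContOn X _) (specContOn X _), cfc_const_one ℝ X]
    rfl
  rw [h2]
  congr 1
  funext x
  by_cases h : 0 ≤ x
  · simp [h, not_lt.mpr (neg_nonpos.mpr h)]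
  · simp [h, neg_pos.mpr (lt_of_not_ge h)]

lemma isHermitian_smul_sub {ρ σ : Matrix (Fin n) (Fin n) ℂ}
    (hρ : ρ.IsHermitian) (hσ : σ.IsHermitian) (γ : ℝ) : (γ • σ - ρ).IsHermitian := by
  refine Matrix.IsHermitian.sub ?_ hρ
  unfold Matrix.IsHermitian
  rw [Matrix.conjTranspose_smul, hσ.eq, star_trivial]

lemma trace_smul_sub_mul_re {ρ σ M : Matrix (Fin n) (Fin n) ℂ} (γ : ℝ) :
    ((γ • σ - ρ) * M).trace.re = γ * (σ * M).trace.re - (ρ * M).trace.re := by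
  rw [sub_mul, smul_mul_assoc, Matrix.trace_sub, Matrix.trace_smul, Complex.sub_re,
    Complex.smul_re, smul_eq_mul]

section main
variable {ρ σ : Matrix (Fin n) (Fin n) ℂ}

lemma f_nonneg (hρ : ρ.PosSemidef) (hσ : σ.PosSemidef) (γ : ℝ) :
    0 ≤ (ρ * projNonneg (γ • σ - ρ)).trace.re :=
  trace_mul_re_nonneg hρ (projNonneg_posSemidef (isHermitian_smul_sub hρ.1 hσ.1 γ))

lemma f_le_one (hρ : ρ.PosSemidef) (hσ : σ.PosSemidef) (hρ1 : ρ.trace = 1) (γ : ℝ) :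
    (ρ * projNonneg (γ • σ - ρ)).trace.re ≤ 1 := by
  have hX := isHermitian_smul_sub hρ.1 hσ.1 γ
  have h := trace_mul_re_nonneg hρ (one_sub_projNonneg_posSemidef hX)
  rw [mul_sub, mul_one, Matrix.trace_sub, Complex.sub_re, hρ1] at h
  simpa using h

lemma s_le_one (hρ : ρ.PosSemidef) (hσ : σ.PosSemidef) (hσ1 : σ.trace = 1) (γ : ℝ) :
    (σ * projNonneg (γ • σ - ρ)).trace.re ≤ 1 := by
  have hX := isHermitian_smul_sub hρ.1 hσ.1 γ
  have h := trace_mul_re_nonneg hσ (one_sub_projNonneg_posSemidef hX)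
  rw [mul_sub, mul_one, Matrix.trace_sub, Complex.sub_re, hσ1] at h
  simpa using h

lemma f_le_gamma (hρ : ρ.PosSemidef) (hσ : σ.PosSemidef) (hσ1 : σ.trace = 1)
    {γ : ℝ} (hγ : 0 ≤ γ) :
    (ρ * projNonneg (γ • σ - ρ)).trace.re ≤ γ := by
  have hX := isHermitian_smul_sub hρ.1 hσ.1 γ
  have h0 : 0 ≤ ((γ • σ - ρ) * projNonneg (γ • σ - ρ)).trace.re := by
    rw [mul_projNonneg_eq hX]
    exact trace_re_nonneg_of_posSemidef (cfc_posSemidef hX _ fun x => le_max_right x 0)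
  rw [trace_smul_sub_mul_re] at h0
  have hs := s_le_one hρ hσ hσ1 (ρ := ρ) γ
  nlinarith

lemma f_mono (hρ : ρ.PosSemidef) (hσ : σ.PosSemidef) {γ γ' : ℝ}
    (h0 : 0 ≤ γ) (h : γ ≤ γ') :
    (ρ * projNonneg (γ • σ - ρ)).trace.re ≤ (ρ * projNonneg (γ' • σ - ρ)).trace.re := by
  rcases eq_or_lt_of_le h with rfl | hlt
  · exact le_refl _
  have hX := isHermitian_smul_sub hρ.1 hσ.1 γ
  have hX' := isHermitian_smul_sub hρ.1 hσ.1 γ'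
  have hP := projNonneg_posSemidef hX
  have hP1 := one_sub_projNonneg_posSemidef hX
  have hP' := projNonneg_posSemidef hX'
  have hP'1 := one_sub_projNonneg_posSemidef hX'
  have h1 := trace_mul_le_trace_mul_projNonneg hX hP' hP'1
  have h2 := trace_mul_le_trace_mul_projNonneg hX' hP hP1
  rw [trace_smul_sub_mul_re, trace_smul_sub_mul_re] at h1 h2
  have key : 0 ≤ (γ' - γ) * ((σ * projNonneg (γ' • σ - ρ)).trace.re
      - (σ * projNonneg (γ • σ - ρ)).trace.re) := by nlinarith
  have hab : 0 ≤ (σ * projNonneg (γ' • σ - ρ)).trace.re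
      - (σ * projNonneg (γ • σ - ρ)).trace.re :=
    nonneg_of_mul_nonneg_right key (sub_pos.mpr hlt)
  nlinarith [mul_nonneg h0 hab]

end main



lemma analytic_main (f : ℝ → ℝ) (hf0 : ∀ γ, 0 ≤ f γ) (hf1 : ∀ γ, f γ ≤ 1)
    (hfγ : ∀ γ : ℝ, 0 ≤ γ → f γ ≤ γ)
    (hfm : ∀ γ γ' : ℝ, 0 ≤ γ → γ ≤ γ' → f γ ≤ f γ')
    (α : ℝ) (hα0 : 0 < α) (hα1 : α < 1) (c : ℝ) (hc : 0 < c) :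
    f c ≤ c ^ (1 - α) * ((1 - α) * ∫ γ in Set.Ioi (0:ℝ), γ ^ (α - 2) * f γ) ∧
    f c ≤ Real.exp ((1 - α) * Real.log c
        + (α - 1) * (Real.log ((1 - α) * ∫ γ in Set.Ioi (0:ℝ), γ ^ (α - 2) * f γ) / (α - 1))) := by
  set F : ℝ → ℝ := fun γ => f (max γ 0) with hFdef
  have hFmono : Monotone F := fun a b hab => hfm _ _ (le_max_right a 0) (max_le_max hab le_rfl)
  have hFmeas : Measurable F := hFmono.measurable
  set G : ℝ → ℝ := fun γ => γ ^ (α - 2) * F γ with hGdef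
  have hGmeasOn : ∀ s : Set ℝ, MeasurableSet s → s ⊆ Set.Ioi 0 →
      AEStronglyMeasurable G (volume.restrict s) := by
    intro s hsm hs
    have hcont : ContinuousOn (fun x : ℝ => x ^ (α - 2)) s := fun x hx =>
      (Real.continuousAt_rpow_const x _ (Or.inl (ne_of_gt (hs hx)))).continuousWithinAt
    exact (hcont.aestronglyMeasurable hsm).mul (hFmeas.aestronglyMeasurable.restrict)
  have hint1 : IntegrableOn G (Set.Ioc 0 1) := by
    have hdom : IntegrableOn (fun γ : ℝ => γ ^ (α - 1)) (Set.Ioc (0:ℝ) 1) := by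
      rw [← intervalIntegrable_iff_integrableOn_Ioc_of_le zero_le_one]
      exact intervalIntegral.intervalIntegrable_rpow' (by linarith)
    refine Integrable.mono hdom (hGmeasOn _ measurableSet_Ioc Set.Ioc_subset_Ioi_self) ?_
    filter_upwards [ae_restrict_mem measurableSet_Ioc] with x hx
    obtain ⟨hx0, hx1⟩ := hx
    have hF : F x = f x := by rw [hFdef]; simp [max_eq_left hx0.le]
    have h1 : 0 ≤ x ^ (α - 2) := Real.rpow_nonneg hx0.le _
    rw [Real.norm_eq_abs, Real.norm_eq_abs, hGdef]
    simp only []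
    rw [hF, abs_of_nonneg (mul_nonneg h1 (hf0 x)), abs_of_nonneg (Real.rpow_nonneg hx0.le _)]
    calc x ^ (α - 2) * f x ≤ x ^ (α - 2) * x := mul_le_mul_of_nonneg_left (hfγ x hx0.le) h1
      _ = x ^ (α - 1) := by
          rw [← Real.rpow_add_one (ne_of_gt hx0)]
          congr 1; ring
  have hint2 : IntegrableOn G (Set.Ioi (1:ℝ)) := by
    have hdom := integrableOn_Ioi_rpow_of_lt (show α - 2 < -1 by linarith) one_pos
    refine Integrable.mono hdom (hGmeasOn _ measurableSet_Ioi fun x hx => Set.mem_Ioi.mpr (lt_trans one_pos (Set.mem_Ioi.mp hx))) ?_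
    filter_upwards [ae_restrict_mem measurableSet_Ioi] with x hx
    have hx0 : (0:ℝ) < x := lt_trans one_pos hx
    have hF : F x = f x := by rw [hFdef]; simp [max_eq_left hx0.le]
    have h1 : 0 ≤ x ^ (α - 2) := Real.rpow_nonneg hx0.le _
    rw [Real.norm_eq_abs, Real.norm_eq_abs, hGdef]
    simp only []
    rw [hF, abs_of_nonneg (mul_nonneg h1 (hf0 x)), abs_of_nonneg h1]
    calc x ^ (α - 2) * f x ≤ x ^ (α - 2) * 1 := mul_le_mul_of_nonneg_left (hf1 x) h1
      _ = x ^ (α - 2) := mul_one _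
  have hGint : IntegrableOn G (Set.Ioi (0:ℝ)) := by
    have h := hint1.union hint2
    rwa [Set.Ioc_union_Ioi_eq_Ioi zero_le_one] at h
  have hEq : Set.EqOn G (fun γ => γ ^ (α - 2) * f γ) (Set.Ioi 0) := fun x hx => by
    simp only [hGdef, hFdef]
    rw [max_eq_left (le_of_lt hx)]
  have hgint : IntegrableOn (fun γ : ℝ => γ ^ (α - 2) * f γ) (Set.Ioi (0:ℝ)) :=
    hGint.congr_fun hEq measurableSet_Ioi
  set I : ℝ := ∫ γ in Set.Ioi (0:ℝ), γ ^ (α - 2) * f γ with hIdef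
  have hJ : ∫ x in Set.Ioi c, x ^ (α - 2) = -c ^ (α - 1) / (α - 1) := by
    rw [integral_Ioi_rpow_of_lt (by linarith) hc, show α - 2 + 1 = α - 1 by ring]
  have hconst_int : IntegrableOn (fun x : ℝ => f c * x ^ (α - 2)) (Set.Ioi c) :=
    (integrableOn_Ioi_rpow_of_lt (by linarith) hc).const_mul _
  have hgc : IntegrableOn (fun γ : ℝ => γ ^ (α - 2) * f γ) (Set.Ioi c) :=
    hgint.mono_set (Set.Ioi_subset_Ioi hc.le)
  have hstep1 : ∫ x in Set.Ioi c, f c * x ^ (α - 2) ≤ ∫ x in Set.Ioi c, x ^ (α - 2) * f x := by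
    refine setIntegral_mono_on hconst_int hgc measurableSet_Ioi fun x hx => ?_
    have hx0 : (0:ℝ) < x := lt_trans hc hx
    rw [mul_comm (f c)]
    exact mul_le_mul_of_nonneg_left (hfm _ _ hc.le (le_of_lt hx)) (Real.rpow_nonneg hx0.le _)
  have hstep2 : ∫ x in Set.Ioi c, x ^ (α - 2) * f x ≤ I := by
    refine setIntegral_mono_set hgint ?_
      (HasSubset.Subset.eventuallyLE (Set.Ioi_subset_Ioi hc.le))
    filter_upwards [ae_restrict_mem measurableSet_Ioi] with x hx
    exact mul_nonneg (Real.rpow_nonneg (le_of_lt hx) _) (hf0 x)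
  have hchain : f c * (-c ^ (α - 1) / (α - 1)) ≤ I := by
    calc f c * (-c ^ (α - 1) / (α - 1)) = ∫ x in Set.Ioi c, f c * x ^ (α - 2) := by
          rw [MeasureTheory.integral_const_mul, hJ]
      _ ≤ ∫ x in Set.Ioi c, x ^ (α - 2) * f x := hstep1
      _ ≤ I := hstep2
  have hQ : f c * c ^ (α - 1) ≤ (1 - α) * I := by
    have heq : (1 - α) * (f c * (-c ^ (α - 1) / (α - 1))) = f c * c ^ (α - 1) := by
      have hne : α - 1 ≠ 0 := sub_ne_zero.mpr (ne_of_lt hα1)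
      field_simp
      ring
    calc f c * c ^ (α - 1) = (1 - α) * (f c * (-c ^ (α - 1) / (α - 1))) := heq.symm
      _ ≤ (1 - α) * I := mul_le_mul_of_nonneg_left hchain (by linarith)
  have hpow1 : c ^ (1 - α) * c ^ (α - 1) = 1 := by
    rw [← Real.rpow_add hc]
    norm_num
  have goal1 : f c ≤ c ^ (1 - α) * ((1 - α) * I) := by
    calc f c = f c * (c ^ (1 - α) * c ^ (α - 1)) := by rw [hpow1, mul_one]
      _ = c ^ (1 - α) * (f c * c ^ (α - 1)) := by ring
      _ ≤ c ^ (1 - α) * ((1 - α) * I) := mul_le_mul_of_nonneg_left hQ (Real.rpow_nonneg hc.le _)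
  refine ⟨goal1, ?_⟩
  have hα1' : α - 1 ≠ 0 := by
    intro h; linarith [(sub_eq_zero.mp h)]
  rw [mul_comm (α - 1), div_mul_cancel₀ _ hα1']
  rcases eq_or_lt_of_le (hf0 c) with h0 | h0
  · rw [← h0]
    exact (Real.exp_pos _).le
  · have hQpos : 0 < (1 - α) * I := by
      rcases le_or_gt ((1 - α) * I) 0 with h | h
      · exact absurd goal1 (not_le.mpr (lt_of_le_of_lt
          (mul_nonpos_of_nonneg_of_nonpos (Real.rpow_nonneg hc.le _) h) h0))
      · exact h
    rw [Real.exp_add, Real.exp_log hQpos, mul_comm (1 - α) (Real.log c),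
      ← Real.rpow_def_of_pos hc]
    exact goal1

end Aux

/-- for density matrices and `0 < α < 1`, with
`Q_α(ρ‖σ) := (1-α) ∫₀^∞ γ^{α-2} Tr[ρ{ρ ≤ γσ}] dγ` and `D_α := log Q_α/(α-1)`, one has
`Tr[ρ{ρ ≤ cσ}] ≤ c^{1-α} Q_α(ρ‖σ)` for every `c > 0`, equivalently
`1 - Tr[ρ{ρ > cσ}] ≤ exp((1-α) log c + (α-1) D_α(ρ‖σ))`. -/
theorem trace_rho_projNonneg_le {n : ℕ} (ρ σ : Matrix (Fin n) (Fin n) ℂ)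
    (hρ : ρ.PosSemidef) (hσ : σ.PosSemidef) (hρ1 : ρ.trace = 1) (hσ1 : σ.trace = 1)
    (α : ℝ) (hα0 : 0 < α) (hα1 : α < 1) (c : ℝ) (hc : 0 < c) :
    (Matrix.trace (ρ * projNonneg (c • σ - ρ))).re
      ≤ c ^ (1 - α) *
        ((1 - α) * ∫ γ in Set.Ioi (0:ℝ),
            γ ^ (α - 2) * (Matrix.trace (ρ * projNonneg (γ • σ - ρ))).re) ∧
    1 - (Matrix.trace (ρ * projPos (ρ - c • σ))).re
      ≤ Real.exp ((1 - α) * Real.log c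
          + (α - 1) * (Real.log ((1 - α) * ∫ γ in Set.Ioi (0:ℝ),
              γ ^ (α - 2) * (Matrix.trace (ρ * projNonneg (γ • σ - ρ))).re) / (α - 1))) := by
  have part := analytic_main (fun γ => (Matrix.trace (ρ * projNonneg (γ • σ - ρ))).re)
    (fun γ => f_nonneg hρ hσ γ) (fun γ => f_le_one hρ hσ hρ1 γ)
    (fun γ h => f_le_gamma hρ hσ hσ1 h) (fun γ γ' h h' => f_mono hρ hσ h h') α hα0 hα1 c hc
  refine ⟨part.1, ?_⟩
  have hproj : projPos (ρ - c • σ) = 1 - projNonneg (c • σ - ρ) := by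
    have h := projPos_neg_eq (isHermitian_smul_sub hρ.1 hσ.1 c)
    rwa [neg_sub] at h
  have hL : (Matrix.trace (ρ * projPos (ρ - c • σ))).re
      = 1 - (Matrix.trace (ρ * projNonneg (c • σ - ρ))).re := by
    rw [hproj, mul_sub, mul_one, Matrix.trace_sub, Complex.sub_re, hρ1]
    simp
  have h2 := part.2
  rw [hL]
  linarith [h2]
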